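/- Let H be a complex (or real) Hilbert space and let f, g, h ∈ H. Suppose that for every λ > 0 there exists a curve v_λ : ℝ → H with v_λ(0) = g + λ·f, differentiable at 0 from within [0, ∞) with derivative v_λ'(0) = h + λ·g, and satisfying ‖v_λ(t)‖ ≤ ‖g + λ·f‖ for all t ≥ 0. Then ‖g‖² ≤ 2·‖f‖·‖h‖. -/

import Mathlib

open Set Complex

/-- Theorem 4.2: the family of contraction orbital estimates along curves with
v_λ(0) = g + λf and v_λ'(0) = h + λg implies the Kato inequality ‖g‖² ≤ 2‖f‖‖h‖. -/
theorem kato_inequality_via_orbits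
    {H : Type*} [NormedAddCommGroup H] [InnerProductSpace ℂ H] [CompleteSpace H]
    (f g h : H)
    (horb : ∀ l : ℝ, 0 < l → ∃ v : ℝ → H,
      v 0 = g + (l : ℂ) • f ∧
      HasDerivWithinAt v (h + (l : ℂ) • g) (Set.Ici 0) 0 ∧
      ∀ t ≥ (0:ℝ), ‖v t‖ ≤ ‖g + (l : ℂ) • f‖) :
    ‖g‖ ^ 2 ≤ 2 * ‖f‖ * ‖h‖ := by
  have hre_self : ∀ x : H, (inner ℂ x x : ℂ).re = ‖x‖ ^ 2 := fun x => by
    simpa using inner_self_eq_norm_sq (𝕜 := ℂ) x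
  have hre_symm : ∀ x y : H, (inner ℂ x y : ℂ).re = (inner ℂ y x : ℂ).re := fun x y => by
    have := inner_re_symm (𝕜 := ℂ) x y
    simpa using this
  -- Step A: dissipativity along the curves
  have key : ∀ l : ℝ, 0 < l →
      Complex.re (inner ℂ (g + (l:ℂ) • f) (h + (l:ℂ) • g) : ℂ) ≤ 0 := by
    intro l hl
    obtain ⟨v, hv0, hvd, hvb⟩ := horb l hl
    set w : H := h + (l:ℂ) • g with hw
    have hF : HasDerivWithinAt (fun t => (inner ℂ (v t) (v t) : ℂ))
        (inner ℂ (v 0) w + inner ℂ w (v 0)) (Ici 0) 0 := hvd.inner ℂ hvd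
    have hφ : HasDerivWithinAt (fun t => Complex.re (inner ℂ (v t) (v t) : ℂ))
        (Complex.re ((inner ℂ (v 0) w : ℂ) + inner ℂ w (v 0))) (Ici 0) 0 :=
      Complex.reCLM.hasFDerivAt.comp_hasDerivWithinAt 0 hF
    have hmax : IsLocalMaxOn (fun t => Complex.re (inner ℂ (v t) (v t) : ℂ)) (Ici 0) 0 := by
      apply Filter.eventually_of_mem self_mem_nhdsWithin
      intro t ht
      have h1 : ‖v t‖ ≤ ‖v 0‖ := by rw [hv0]; exact hvb t ht
      simp only [hre_self]
      exact pow_le_pow_left₀ (norm_nonneg _) h1 2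
    have hcone : (1:ℝ) ∈ posTangentConeAt (Ici (0:ℝ)) 0 := by
      rw [one_mem_posTangentConeAt_iff_mem_closure]
      have : Ioi (0:ℝ) ∩ Ici 0 = Ioi 0 := inter_eq_left.2 Ioi_subset_Ici_self
      rw [this, closure_Ioi]
      exact self_mem_Ici
    have hle := hmax.hasFDerivWithinAt_nonpos hφ.hasFDerivWithinAt hcone
    simp only [ContinuousLinearMap.smulRight_apply, ContinuousLinearMap.one_apply,
      ContinuousLinearMap.toSpanSingleton_apply, one_smul] at hle
    rw [Complex.add_re, hre_symm w (v 0)] at hle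
    rw [hv0] at hle
    linarith
  -- Step B: algebra
  have key' : ∀ l : ℝ, 0 < l →
      (inner ℂ g h : ℂ).re + l * ‖g‖ ^ 2 + l * (inner ℂ f h : ℂ).re
        + l ^ 2 * (inner ℂ f g : ℂ).re ≤ 0 := by
    intro l hl
    have h0 := key l hl
    have hexp : (inner ℂ (g + (l:ℂ) • f) (h + (l:ℂ) • g) : ℂ)
        = inner ℂ g h + (l:ℂ) * inner ℂ g g + (l:ℂ) * inner ℂ f h
          + (l:ℂ) * ((l:ℂ) * inner ℂ f g) := by
      simp only [inner_add_left, inner_add_right, inner_smul_left, inner_smul_right,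
        Complex.conj_ofReal]
      ring
    rw [hexp] at h0
    simp only [Complex.add_re, Complex.re_ofReal_mul, hre_self] at h0
    nlinarith [h0]
  have hnorm : ∀ l : ℝ, 0 < l →
      0 ≤ ‖g‖ ^ 2 + l ^ 2 * ‖f‖ ^ 2 + l⁻¹ ^ 2 * ‖h‖ ^ 2 + 2 * l * (inner ℂ f g : ℂ).re
        + 2 * l⁻¹ * (inner ℂ g h : ℂ).re + 2 * (inner ℂ f h : ℂ).re := by
    intro l hl
    have h0 : (0:ℝ) ≤ (inner ℂ (g + (l:ℂ) • f + (((l:ℝ)⁻¹ : ℝ) : ℂ) • h)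
        (g + (l:ℂ) • f + (((l:ℝ)⁻¹ : ℝ) : ℂ) • h) : ℂ).re := by
      rw [hre_self]; positivity
    have hexp : (inner ℂ (g + (l:ℂ) • f + (((l:ℝ)⁻¹ : ℝ) : ℂ) • h)
        (g + (l:ℂ) • f + (((l:ℝ)⁻¹ : ℝ) : ℂ) • h) : ℂ)
        = inner ℂ g g + (l:ℂ) * ((l:ℂ) * inner ℂ f f)
          + (((l:ℝ)⁻¹ : ℝ) : ℂ) * ((((l:ℝ)⁻¹ : ℝ) : ℂ) * inner ℂ h h)
          + (l:ℂ) * (inner ℂ g f + inner ℂ f g)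
          + (((l:ℝ)⁻¹ : ℝ) : ℂ) * (inner ℂ g h + inner ℂ h g)
          + (l:ℂ) * ((((l:ℝ)⁻¹ : ℝ) : ℂ) * (inner ℂ f h + inner ℂ h f)) := by
      simp only [inner_add_left, inner_add_right, inner_smul_left, inner_smul_right,
        Complex.conj_ofReal]
      ring
    rw [hexp] at h0
    simp only [Complex.add_re, Complex.re_ofReal_mul, hre_self,
      hre_symm g f, hre_symm h g, hre_symm h f] at h0
    have hl0 : l ≠ 0 := ne_of_gt hl
    have e2 : ‖g‖ ^ 2 + l * (l * ‖f‖ ^ 2) + l⁻¹ * (l⁻¹ * ‖h‖ ^ 2)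
        + l * ((inner ℂ f g : ℂ).re + (inner ℂ f g : ℂ).re)
        + l⁻¹ * ((inner ℂ g h : ℂ).re + (inner ℂ g h : ℂ).re)
        + l * (l⁻¹ * ((inner ℂ f h : ℂ).re + (inner ℂ f h : ℂ).re))
        = ‖g‖ ^ 2 + l ^ 2 * ‖f‖ ^ 2 + l⁻¹ ^ 2 * ‖h‖ ^ 2 + 2 * l * (inner ℂ f g : ℂ).re
          + 2 * l⁻¹ * (inner ℂ g h : ℂ).re + 2 * (inner ℂ f h : ℂ).re := by
      field_simp
      ring
    rw [e2] at h0
    exact h0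
  have main : ∀ l : ℝ, 0 < l → ‖g‖ ^ 2 ≤ l ^ 2 * ‖f‖ ^ 2 + l⁻¹ ^ 2 * ‖h‖ ^ 2 := by
    intro l hl
    have h1 := key' l hl
    have h2 := hnorm l hl
    have hlinv : l * l⁻¹ = 1 := mul_inv_cancel₀ (ne_of_gt hl)
    have e : 2 * l⁻¹ * ((inner ℂ g h : ℂ).re + l * ‖g‖ ^ 2 + l * (inner ℂ f h : ℂ).re
        + l ^ 2 * (inner ℂ f g : ℂ).re)
        = 2 * l⁻¹ * (inner ℂ g h : ℂ).re + 2 * ‖g‖ ^ 2 + 2 * (inner ℂ f h : ℂ).re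
          + 2 * l * (inner ℂ f g : ℂ).re := by
      field_simp
    have h3 : 2 * l⁻¹ * ((inner ℂ g h : ℂ).re + l * ‖g‖ ^ 2 + l * (inner ℂ f h : ℂ).re
        + l ^ 2 * (inner ℂ f g : ℂ).re) ≤ 0 :=
      mul_nonpos_of_nonneg_of_nonpos (by positivity) h1
    rw [e] at h3
    linarith
  -- conclude
  set F : ℝ := ‖f‖ with hF
  set Hn : ℝ := ‖h‖ with hHn
  have hFn : (0:ℝ) ≤ F := norm_nonneg _
  have hHnn : (0:ℝ) ≤ Hn := norm_nonneg _
  have final : ∀ ε : ℝ, 0 < ε → ‖g‖ ^ 2 ≤ 2 * F * Hn + ε * (F + Hn) := by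
    intro ε hε
    have hFε : 0 < F + ε := by linarith
    have hHε : 0 < Hn + ε := by linarith
    set l : ℝ := Real.sqrt ((Hn + ε) / (F + ε)) with hl
    have hlpos : 0 < l := Real.sqrt_pos.2 (div_pos hHε hFε)
    have hlsq : l ^ 2 = (Hn + ε) / (F + ε) := Real.sq_sqrt (le_of_lt (div_pos hHε hFε))
    have hlinvsq : l⁻¹ ^ 2 = (F + ε) / (Hn + ε) := by
      rw [inv_pow, hlsq, inv_div]
    have hmain := main l hlpos
    rw [hlsq, hlinvsq] at hmain
    have t1 : (Hn + ε) / (F + ε) * F ^ 2 ≤ F * (Hn + ε) := by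
      rw [div_mul_eq_mul_div, div_le_iff₀ hFε]
      nlinarith [mul_nonneg (mul_nonneg hHε.le hFn) hε.le]
    have t2 : (F + ε) / (Hn + ε) * Hn ^ 2 ≤ Hn * (F + ε) := by
      rw [div_mul_eq_mul_div, div_le_iff₀ hHε]
      nlinarith [mul_nonneg (mul_nonneg hFε.le hHnn) hε.le]
    calc ‖g‖ ^ 2 ≤ (Hn + ε) / (F + ε) * F ^ 2 + (F + ε) / (Hn + ε) * Hn ^ 2 := hmain
      _ ≤ F * (Hn + ε) + Hn * (F + ε) := add_le_add t1 t2
      _ = 2 * F * Hn + ε * (F + Hn) := by ring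
  by_contra hcon
  push_neg at hcon
  have hd : 0 < ‖g‖ ^ 2 - 2 * F * Hn := by linarith
  rcases le_or_gt (F + Hn) 0 with hFH | hFH
  · have := final 1 one_pos
    nlinarith
  · set ε : ℝ := (‖g‖ ^ 2 - 2 * F * Hn) / (2 * (F + Hn)) with hε
    have hεpos : 0 < ε := by positivity
    have := final ε hεpos
    have heq : ε * (F + Hn) = (‖g‖ ^ 2 - 2 * F * Hn) / 2 := by
      rw [hε]
      field_simp
    rw [heq] at this
    linarith
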